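/- arXiv:1612.05408 — 3 statements merged into one kernel-verified Lean document; each statement's English description precedes it below -/
import Mathlib

section
/- Let $0<\alpha<1$, $f:[0,T]\to\mathbb{R}$ upper semicontinuous, $g\in C^1((0,T])\cap C([0,T])$, and suppose $f-g$ attains its supremum over $(0,T]$ at a point $\hat t\in(0,T]$. Then the negative part of $\tau\mapsto (f(\hat t)-f(\hat t-\tau))\tau^{-\alpha-1}$ is Lebesgue integrable on $(0,\hat t)$. -/
open MeasureTheory Set Filter Real Topology

theorem stmt_3 (α T : ℝ) (hα : 0 < α) (hα1 : α < 1) (hT : 0 < T)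
    (f g : ℝ → ℝ) (hf : UpperSemicontinuousOn f (Icc 0 T))
    (hgc : ContinuousOn g (Icc 0 T)) (hg : ContDiffOn ℝ 1 g (Ioc 0 T))
    (t0 : ℝ) (ht0 : t0 ∈ Ioc 0 T)
    (hmax : ∀ s ∈ Ioc (0:ℝ) T, f s - g s ≤ f t0 - g t0) :
    IntegrableOn (fun τ => max (-((f t0 - f (t0 - τ)) / τ ^ (α + 1))) 0) (Ioo 0 t0) volume := by
  obtain ⟨ht0pos, ht0T⟩ := ht0
  set F : ℝ → ℝ := fun τ => max (-((f t0 - f (t0 - τ)) / τ ^ (α + 1))) 0 with hF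
  -- measurability of f restricted to Icc 0 T
  have hrest : UpperSemicontinuous (fun x : Icc (0:ℝ) T => f x) := by
    intro x y hy
    have h2 : ∀ᶠ z in nhdsWithin (x : ℝ) (Icc (0:ℝ) T), f z < y := hf x x.2 y hy
    rw [← map_nhds_subtype_val x] at h2
    exact eventually_map.mp h2
  have hfm : AEMeasurable f (volume.restrict (Icc 0 T)) := by
    rw [aemeasurable_restrict_iff_comap_subtype measurableSet_Icc]
    exact hrest.measurable.aemeasurable
  have hss0 : Ioo (0:ℝ) t0 ⊆ Icc 0 T := fun x hx => ⟨hx.1.le, hx.2.le.trans ht0T⟩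
  have hfm' : AEMeasurable f (volume.restrict (Ioo 0 t0)) :=
    hfm.mono_measure (Measure.restrict_mono hss0 le_rfl)
  have hmp : MeasurePreserving (fun τ : ℝ => t0 - τ)
      (volume.restrict (Ioo 0 t0)) (volume.restrict (Ioo 0 t0)) := by
    have h1 : MeasurePreserving (fun τ : ℝ => t0 - τ) volume volume :=
      Measure.measurePreserving_sub_left volume t0
    have h2 := h1.restrict_preimage (s := Ioo 0 t0) measurableSet_Ioo
    have h3 : (fun τ : ℝ => t0 - τ) ⁻¹' Ioo 0 t0 = Ioo 0 t0 := by
      ext x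
      simp only [mem_preimage, mem_Ioo]
      constructor <;> intro h <;> constructor <;> linarith [h.1, h.2]
    rwa [h3] at h2
  have hcomp : AEStronglyMeasurable (fun τ => f (t0 - τ)) (volume.restrict (Ioo 0 t0)) :=
    hfm'.aestronglyMeasurable.comp_measurePreserving hmp
  have hrpow : Measurable fun τ : ℝ => τ ^ (α + 1) :=
    (Real.continuous_rpow_const (by linarith)).measurable
  have hFmeas : AEStronglyMeasurable F (volume.restrict (Ioo 0 t0)) := by
    apply AEMeasurable.aestronglyMeasurable
    exact ((aemeasurable_const.sub hcomp.aemeasurable).div hrpow.aemeasurable).neg.max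
      aemeasurable_const
  -- key comparison: for τ ∈ (0, t0), f t0 - f (t0 - τ) ≥ g t0 - g (t0 - τ)
  have hkey : ∀ τ ∈ Ioo (0:ℝ) t0, f (t0 - τ) - f t0 ≤ g (t0 - τ) - g t0 := by
    intro τ hτ
    have h1 : t0 - τ ∈ Ioc (0:ℝ) T := ⟨by linarith [hτ.2], by linarith [hτ.1]⟩
    have := hmax (t0 - τ) h1
    linarith
  -- Lipschitz bound for g on [t0/2, t0]
  have hsub : Icc (t0 / 2) t0 ⊆ Ioc 0 T := fun x hx => ⟨by linarith [hx.1], hx.2.trans ht0T⟩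
  have hgs : ContDiffOn ℝ 1 g (Icc (t0 / 2) t0) := hg.mono hsub
  have hud : UniqueDiffOn ℝ (Icc (t0 / 2) t0) := uniqueDiffOn_Icc (by linarith)
  have hdc : ContinuousOn (derivWithin g (Icc (t0 / 2) t0)) (Icc (t0 / 2) t0) :=
    hgs.continuousOn_derivWithin hud le_rfl
  obtain ⟨C, hC⟩ := (isCompact_Icc).exists_bound_of_continuousOn hdc
  have hCnn : (0:ℝ) ≤ C := le_trans (norm_nonneg _) (hC t0 ⟨by linarith, le_rfl⟩)
  have hlip : LipschitzOnWith C.toNNReal g (Icc (t0 / 2) t0) := by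
    apply (convex_Icc _ _).lipschitzOnWith_of_nnnorm_derivWithin_le
      (hgs.differentiableOn one_ne_zero)
    intro x hx
    rw [← NNReal.coe_le_coe, coe_nnnorm, Real.coe_toNNReal _ hCnn]
    exact hC x hx
  -- bound for g on [0, T]
  obtain ⟨B, hB⟩ := (isCompact_Icc).exists_bound_of_continuousOn hgc
  have hBnn : (0:ℝ) ≤ B := le_trans (norm_nonneg _) (hB 0 ⟨le_rfl, hT.le⟩)
  -- split the domain
  have hsplit : Ioo (0:ℝ) t0 = Ioc 0 (t0 / 2) ∪ Ioo (t0 / 2) t0 :=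
    (Set.Ioc_union_Ioo_eq_Ioo (by linarith) (by linarith)).symm
  have hss1 : Ioc (0:ℝ) (t0 / 2) ⊆ Ioo 0 t0 := fun x hx => ⟨hx.1, lt_of_le_of_lt hx.2 (by linarith)⟩
  have hss2 : Ioo (t0 / 2) t0 ⊆ Ioo 0 t0 := fun x hx => ⟨by linarith [hx.1], hx.2⟩
  rw [IntegrableOn, hsplit]
  apply IntegrableOn.union
  · -- near 0: F τ ≤ C * τ ^ (-α)
    have hbound : IntegrableOn (fun τ : ℝ => C * τ ^ (-α)) (Ioc 0 (t0 / 2)) volume := by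
      have h1 : IntervalIntegrable (fun x : ℝ => x ^ (-α)) volume 0 (t0 / 2) :=
        intervalIntegral.intervalIntegrable_rpow' (by linarith)
      have h2 := (intervalIntegrable_iff_integrableOn_Ioc_of_le (by linarith : (0:ℝ) ≤ t0 / 2)).1 h1
      exact h2.const_mul C
    apply Integrable.mono' hbound
      (hFmeas.mono_measure (Measure.restrict_mono hss1 le_rfl))
    rw [ae_restrict_iff' measurableSet_Ioc]
    apply ae_of_all
    intro τ hτ
    have hτ0 : (0:ℝ) < τ := hτ.1
    have hτt0 : τ < t0 := lt_of_le_of_lt hτ.2 (by linarith)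
    have hpow : (0:ℝ) < τ ^ (α + 1) := Real.rpow_pos_of_pos hτ0 _
    have hnn : (0:ℝ) ≤ F τ := le_max_right _ _
    rw [Real.norm_of_nonneg hnn]
    have hmem1 : t0 - τ ∈ Icc (t0 / 2) t0 := ⟨by linarith [hτ.2], by linarith⟩
    have hmem2 : t0 ∈ Icc (t0 / 2) t0 := ⟨by linarith, le_rfl⟩
    have hdist := hlip.dist_le_mul _ hmem1 _ hmem2
    rw [Real.dist_eq, Real.dist_eq] at hdist
    have habs : |t0 - τ - t0| = τ := by rw [abs_of_nonpos (by linarith)]; ring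
    rw [habs, Real.coe_toNNReal _ hCnn] at hdist
    have hgb : g (t0 - τ) - g t0 ≤ C * τ := le_trans (le_abs_self _) hdist
    have hfb : f (t0 - τ) - f t0 ≤ C * τ :=
      le_trans (hkey τ ⟨hτ0, hτt0⟩) hgb
    have heq : C * τ / τ ^ (α + 1) = C * τ ^ (-α) := by
      rw [Real.rpow_add_one hτ0.ne', Real.rpow_neg hτ0.le]
      field_simp
    apply max_le
    · rw [neg_div' ]
      have : -(f t0 - f (t0 - τ)) = f (t0 - τ) - f t0 := by ring
      rw [this, ← heq]
      gcongr
    · positivity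
  · -- near t0: F bounded by constant
    have hconst : IntegrableOn (fun _ : ℝ => 2 * B / (t0 / 2) ^ (α + 1))
        (Ioo (t0 / 2) t0) volume := by
      exact integrableOn_const measure_Ioo_lt_top.ne
    apply Integrable.mono' hconst
      (hFmeas.mono_measure (Measure.restrict_mono hss2 le_rfl))
    rw [ae_restrict_iff' measurableSet_Ioo]
    apply ae_of_all
    intro τ hτ
    have hτ0 : (0:ℝ) < τ := by linarith [hτ.1]
    have hτt0 : τ < t0 := hτ.2
    have hpow : (0:ℝ) < τ ^ (α + 1) := Real.rpow_pos_of_pos hτ0 _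
    have hpow2 : (0:ℝ) < (t0 / 2) ^ (α + 1) := Real.rpow_pos_of_pos (by linarith) _
    have hnn : (0:ℝ) ≤ F τ := le_max_right _ _
    rw [Real.norm_of_nonneg hnn]
    have hmem1 : t0 - τ ∈ Icc (0:ℝ) T := ⟨by linarith, by linarith⟩
    have hmem2 : t0 ∈ Icc (0:ℝ) T := ⟨ht0pos.le, ht0T⟩
    have hgb : g (t0 - τ) - g t0 ≤ 2 * B := by
      have h1 := (abs_le.1 ((hB _ hmem1))).2
      have h2 := (abs_le.1 ((hB _ hmem2))).1
      have h1' : g (t0 - τ) ≤ B := le_trans (le_abs_self _) (hB _ hmem1)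
      have h2' : -B ≤ g t0 := neg_le_of_neg_le (le_trans (neg_le_abs _) (hB _ hmem2))
      linarith
    have hfb : f (t0 - τ) - f t0 ≤ 2 * B :=
      le_trans (hkey τ ⟨hτ0, hτt0⟩) hgb
    apply max_le
    · rw [neg_div']
      have : -(f t0 - f (t0 - τ)) = f (t0 - τ) - f t0 := by ring
      rw [this]
      calc (f (t0 - τ) - f t0) / τ ^ (α + 1) ≤ 2 * B / τ ^ (α + 1) := by gcongr
        _ ≤ 2 * B / (t0 / 2) ^ (α + 1) :=
            div_le_div_of_nonneg_left (by linarith) hpow2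
              (Real.rpow_le_rpow (by linarith) hτ.1.le (by linarith))
    · positivity
end

section
/- Let $0<\alpha<1$ and $T>0$. There exists no function $\psi\in C^1((0,T]^2)\cap C([0,T]^2)$ with $\partial_t\psi(\cdot,s)\in L^1(0,T)$ for each $s$ and $\partial_s\psi(t,\cdot)\in L^1(0,T)$ for each $t$, such that (i) $(\partial_t^{\alpha}\psi(\cdot,s))(t)+(\partial_s^{\alpha}\psi(t,\cdot))(s)\ge 0$ for all $(t,s)\in(0,T)^2$, (ii) $\psi(t,t)=0$ for all $t\in[0,T]$, and (iii) $\psi(t,s)>0$ whenever $t\ne s$. -/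
open MeasureTheory Set Filter Real intervalIntegral

open scoped Interval

lemma aux_wint {α t : ℝ} (hα : 0 < α) (hα1 : α < 1) (ht : 0 < t)
    {d : ℝ → ℝ} (hd : IntegrableOn d (Ioo 0 t) volume)
    (hc : ContinuousOn d (Ioc 0 t)) :
    IntervalIntegrable (fun τ => d τ / (t - τ) ^ α) volume 0 t := by
  have ht2 : 0 < t / 2 := by linarith
  have ht2t : t / 2 < t := by linarith
  rw [intervalIntegrable_iff_integrableOn_Ioc_of_le ht.le]
  have hsplit : Ioc (0:ℝ) t = Ioc 0 (t/2) ∪ Ioc (t/2) t := by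
    rw [Ioc_union_Ioc_eq_Ioc ht2.le ht2t.le]
  rw [hsplit]
  apply IntegrableOn.union
  · -- bounded weight times integrable
    have hd1 : IntegrableOn d (Ioc 0 (t/2)) volume :=
      hd.mono_set (fun x hx => ⟨hx.1, lt_of_le_of_lt hx.2 ht2t⟩)
    have hmeas : AEStronglyMeasurable (fun τ => ((t - τ) ^ α)⁻¹)
        (volume.restrict (Ioc (0:ℝ) (t/2))) := by
      refine ContinuousOn.aestronglyMeasurable ?_ measurableSet_Ioc
      refine ContinuousOn.inv₀ ?_ ?_
      · exact (continuousOn_const.sub continuousOn_id).rpow_const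
          (fun x hx => Or.inr hα.le)
      · intro x hx
        exact ne_of_gt (Real.rpow_pos_of_pos (by have := hx.2; linarith) _)
    have hbound : ∀ᵐ τ ∂(volume.restrict (Ioc (0:ℝ) (t/2))),
        ‖((t - τ) ^ α)⁻¹‖ ≤ ((t/2) ^ α)⁻¹ := by
      rw [ae_restrict_iff' measurableSet_Ioc]
      refine Eventually.of_forall fun τ hτ => ?_
      have h2 : t / 2 ≤ t - τ := by have := hτ.2; linarith
      have hp : (0:ℝ) < (t/2) ^ α := Real.rpow_pos_of_pos ht2 _
      have hle : (t/2) ^ α ≤ (t - τ) ^ α := Real.rpow_le_rpow ht2.le h2 hα.le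
      rw [Real.norm_eq_abs, abs_of_nonneg (inv_nonneg.mpr (Real.rpow_nonneg (by linarith) _))]
      exact inv_anti₀ hp hle
    have h0 : IntegrableOn (fun τ => ((t - τ) ^ α)⁻¹ * d τ) (Ioc (0:ℝ) (t/2)) volume :=
      Integrable.bdd_mul (c := ((t/2) ^ α)⁻¹) hd1 hmeas hbound
    exact h0.congr_fun (fun τ _ => by rw [div_eq_mul_inv, mul_comm]) measurableSet_Ioc
  · -- integrable weight times bounded continuous
    have hw : IntervalIntegrable (fun x => (t - x) ^ (-α)) volume (t/2) t := by
      have hbase : IntervalIntegrable (fun x : ℝ => x ^ (-α)) volume 0 (t/2) :=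
        intervalIntegral.intervalIntegrable_rpow' (by linarith)
      have h2 := (hbase.comp_sub_left t).symm
      rw [sub_zero, sub_half] at h2
      exact h2
    have hdc : ContinuousOn d (uIcc (t/2) t) := by
      rw [uIcc_of_le ht2t.le]
      exact hc.mono (fun x hx => ⟨lt_of_lt_of_le ht2 hx.1, hx.2⟩)
    have hmul : IntervalIntegrable (fun x => (t - x) ^ (-α) * d x) volume (t/2) t :=
      hw.mul_continuousOn hdc
    rw [intervalIntegrable_iff_integrableOn_Ioc_of_le ht2t.le] at hmul
    refine hmul.congr_fun (fun τ hτ => ?_) measurableSet_Ioc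
    dsimp only
    rw [Real.rpow_neg (by linarith [hτ.2] : (0:ℝ) ≤ t - τ), div_eq_mul_inv, mul_comm]

lemma aux_key {α t : ℝ} (hα : 0 < α) (hα1 : α < 1) (ht : 0 < t)
    {g h : ℝ → ℝ}
    (hgc : ContinuousOn g (Icc 0 t))
    (hgd : ∀ τ ∈ Ioc (0:ℝ) t, HasDerivAt g (h τ) τ)
    (hhc : ContinuousOn h (Ioc 0 t))
    (hint : IntervalIntegrable (fun τ => h τ / (t - τ) ^ α) volume 0 t)
    (hgt : g t = 0) (hgpos : ∀ τ ∈ Ico (0:ℝ) t, 0 < g τ) :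
    (∫ τ in (0:ℝ)..t, h τ / (t - τ) ^ α) < 0 := by
  have ht2 : 0 < t / 2 := by linarith
  have ht2t : t / 2 < t := by linarith
  have h1α : 0 < 1 - α := by linarith
  -- bound on h near t
  obtain ⟨M, hM⟩ := isCompact_Icc.exists_bound_of_continuousOn
    (hhc.mono (fun x (hx : x ∈ Icc (t/2) t) => ⟨lt_of_lt_of_le ht2 hx.1, hx.2⟩))
  have hM0 : 0 ≤ M := le_trans (norm_nonneg (h t)) (hM t ⟨ht2t.le, le_refl t⟩)
  set C : ℝ := M * (1 + 1/(1-α)) with hC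
  have hC0 : 0 ≤ C := by
    apply mul_nonneg hM0
    have : 0 < 1/(1-α) := by positivity
    linarith
  set I : ℝ := ∫ τ in (0:ℝ)..t, h τ / (t - τ) ^ α with hI
  have key : ∀ δ ∈ Ioc (0:ℝ) (t/2), I ≤ C * δ ^ (1-α) - g 0 * t ^ (-α) := by
    intro δ hδ
    obtain ⟨hδ0, hδ2⟩ := hδ
    set b : ℝ := t - δ with hb
    have hb0 : 0 < b := by simp only [hb]; linarith
    have hbt : b < t := by simp only [hb]; linarith
    have hbge : t / 2 ≤ b := by simp only [hb]; linarith
    -- integrability on subintervals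
    have int1b : IntervalIntegrable (fun τ => h τ / (t - τ) ^ α) volume 0 b := by
      apply hint.mono_set
      rw [uIcc_of_le hb0.le, uIcc_of_le ht.le]
      exact Icc_subset_Icc le_rfl hbt.le
    have int1bt : IntervalIntegrable (fun τ => h τ / (t - τ) ^ α) volume b t := by
      apply hint.mono_set
      rw [uIcc_of_le hbt.le, uIcc_of_le ht.le]
      exact Icc_subset_Icc hb0.le le_rfl
    -- the derivative of the weight
    have hwderiv : ∀ τ ∈ Ioo (0:ℝ) b,
        HasDerivAt (fun x => (t - x) ^ (-α)) (α * (t - τ) ^ (-α - 1)) τ := by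
      intro τ hτ
      have htτ : 0 < t - τ := by have := hτ.2; simp only [hb] at this ⊢; linarith
      have h2 : HasDerivAt (fun y : ℝ => y ^ (-α)) ((-α) * (t - τ) ^ (-α - 1)) (t - τ) :=
        Real.hasDerivAt_rpow_const (Or.inl (ne_of_gt htτ))
      have h1 : HasDerivAt (fun x : ℝ => t - x) (-1) τ := (hasDerivAt_id τ).const_sub t
      have := h2.comp τ h1
      exact this.congr_deriv (by ring)
    -- FTC on [0, b] for g * weight
    have hasP : ∀ τ ∈ Ioo (0:ℝ) b,
        HasDerivAt (fun x => g x * (t - x) ^ (-α))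
          (h τ / (t - τ) ^ α + g τ * (α * (t - τ) ^ (-α - 1))) τ := by
      intro τ hτ
      have htτ : 0 < t - τ := by have := hτ.2; simp only [hb] at this ⊢; linarith
      have hgd' : HasDerivAt g (h τ) τ := hgd τ ⟨hτ.1, by linarith [hτ.2]⟩
      have := hgd'.mul (hwderiv τ hτ)
      exact this.congr_deriv (by rw [Real.rpow_neg htτ.le, div_eq_mul_inv])
    have contP : ContinuousOn (fun x => g x * (t - x) ^ (-α)) (Icc 0 b) := by
      refine (hgc.mono (Icc_subset_Icc le_rfl hbt.le)).mul ?_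
      refine (continuousOn_const.sub continuousOn_id).rpow_const (fun x hx => Or.inl ?_)
      have hxb : x ≤ t - δ := hx.2
      have h0 : (0:ℝ) < t - id x := by simp only [id_eq]; linarith
      exact ne_of_gt h0
    have int2b : IntervalIntegrable (fun τ => g τ * (α * (t - τ) ^ (-α - 1))) volume 0 b := by
      apply ContinuousOn.intervalIntegrable
      rw [uIcc_of_le hb0.le]
      refine (hgc.mono (Icc_subset_Icc le_rfl hbt.le)).mul
        (continuousOn_const.mul ?_)
      refine (continuousOn_const.sub continuousOn_id).rpow_const (fun x hx => Or.inl ?_)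
      have hxb : x ≤ t - δ := hx.2
      have h0 : (0:ℝ) < t - id x := by simp only [id_eq]; linarith
      exact ne_of_gt h0
    have ftc1 : (∫ τ in (0:ℝ)..b,
          (h τ / (t - τ) ^ α + g τ * (α * (t - τ) ^ (-α - 1))))
        = g b * δ ^ (-α) - g 0 * t ^ (-α) := by
      have := integral_eq_sub_of_hasDeriv_right_of_le hb0.le contP
        (fun τ hτ => (hasP τ hτ).hasDerivWithinAt) (int1b.add int2b)
      rw [this]
      have : t - b = δ := by simp [hb]
      rw [this, sub_zero]
    have hsplit1 : (∫ τ in (0:ℝ)..b, h τ / (t - τ) ^ α)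
        = g b * δ ^ (-α) - g 0 * t ^ (-α)
          - ∫ τ in (0:ℝ)..b, g τ * (α * (t - τ) ^ (-α - 1)) := by
      rw [← ftc1, integral_add int1b int2b]; ring
    have hsecond_nonneg : 0 ≤ ∫ τ in (0:ℝ)..b, g τ * (α * (t - τ) ^ (-α - 1)) := by
      apply intervalIntegral.integral_nonneg hb0.le
      intro τ hτ
      apply mul_nonneg
      · exact (hgpos τ ⟨hτ.1, lt_of_le_of_lt hτ.2 hbt⟩).le
      · exact mul_nonneg hα.le (Real.rpow_nonneg (by have := hτ.2; linarith) _)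
    -- bound g b
    have hgb : g b ≤ M * δ := by
      have hftc2 : (∫ τ in b..t, h τ) = g t - g b := by
        apply integral_eq_sub_of_hasDeriv_right_of_le hbt.le
          (hgc.mono (Icc_subset_Icc hb0.le le_rfl))
          (fun τ hτ => ((hgd τ ⟨lt_trans hb0 hτ.1, hτ.2.le⟩).hasDerivWithinAt))
        apply ContinuousOn.intervalIntegrable
        rw [uIcc_of_le hbt.le]
        exact hhc.mono (fun x hx => ⟨lt_of_lt_of_le hb0 hx.1, hx.2⟩)
      have hnorm : ‖∫ τ in b..t, h τ‖ ≤ M * |t - b| := by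
        apply intervalIntegral.norm_integral_le_of_norm_le_const
        intro x hx
        rw [uIoc_of_le hbt.le] at hx
        exact hM x ⟨le_of_lt (lt_of_le_of_lt hbge hx.1), hx.2⟩
      have habs : |t - b| = δ := by rw [abs_of_pos (by linarith)]; simp [hb]
      rw [habs, hftc2, hgt, Real.norm_eq_abs] at hnorm
      have := neg_le_of_abs_le hnorm
      linarith [abs_le.mp hnorm |>.1]
    have hδα : (0:ℝ) < δ ^ (-α) := Real.rpow_pos_of_pos hδ0 _
    have hgbw : g b * δ ^ (-α) ≤ M * δ ^ (1-α) := by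
      have h1 : g b * δ ^ (-α) ≤ (M * δ) * δ ^ (-α) :=
        mul_le_mul_of_nonneg_right hgb hδα.le
      have h2 : (M * δ) * δ ^ (-α) = M * δ ^ (1-α) := by
        rw [show (1:ℝ) - α = 1 + (-α) by ring, Real.rpow_add hδ0, Real.rpow_one]
        ring
      linarith
    -- tail bound
    have htail : (∫ τ in b..t, h τ / (t - τ) ^ α) ≤ M * δ ^ (1-α) / (1-α) := by
      have hbd : IntervalIntegrable (fun τ => M * (t - τ) ^ (-α)) volume b t := by
        apply IntervalIntegrable.const_mul
        have hbase : IntervalIntegrable (fun x : ℝ => x ^ (-α)) volume 0 δ :=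
          intervalIntegral.intervalIntegrable_rpow' (by linarith)
        have h2 := (hbase.comp_sub_left t).symm
        rw [sub_zero] at h2
        have : t - δ = b := rfl
        rw [this] at h2
        exact h2
      have hle : ∀ᵐ τ ∂(volume.restrict (Ι b t)),
          ‖h τ / (t - τ) ^ α‖ ≤ M * (t - τ) ^ (-α) := by
        rw [uIoc_of_le hbt.le, ae_restrict_iff' measurableSet_Ioc]
        refine Eventually.of_forall fun τ hτ => ?_
        have htτ : 0 ≤ t - τ := by linarith [hτ.2]
        rw [Real.norm_eq_abs, abs_div, Real.rpow_neg htτ, div_eq_mul_inv,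
          abs_of_nonneg (Real.rpow_nonneg htτ α)]
        apply mul_le_mul_of_nonneg_right _ (inv_nonneg.mpr (Real.rpow_nonneg htτ α))
        exact hM τ ⟨le_of_lt (lt_of_le_of_lt hbge hτ.1), hτ.2⟩
      have hval : (∫ τ in b..t, M * (t - τ) ^ (-α)) = M * (δ ^ (1-α) / (1-α)) := by
        rw [intervalIntegral.integral_const_mul]
        congr 1
        have hcomp : (∫ τ in b..t, (t - τ) ^ (-α))
            = ∫ x in (t - t)..(t - b), x ^ (-α) :=
          intervalIntegral.integral_comp_sub_left (fun x : ℝ => x ^ (-α)) t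
        rw [hcomp]
        have h1 : t - t = (0:ℝ) := by ring
        have h2 : t - b = δ := by simp [hb]
        rw [h1, h2, integral_rpow (Or.inl (by linarith))]
        rw [Real.zero_rpow (by linarith : -α + 1 ≠ 0)]
        rw [show -α + 1 = 1 - α by ring]
        ring
      calc (∫ τ in b..t, h τ / (t - τ) ^ α)
          ≤ ‖∫ τ in b..t, h τ / (t - τ) ^ α‖ := le_abs_self _
        _ ≤ |∫ τ in b..t, M * (t - τ) ^ (-α)| :=
            intervalIntegral.norm_integral_le_abs_of_norm_le hle hbd
        _ = M * δ ^ (1-α) / (1-α) := by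
            rw [hval, abs_of_nonneg, mul_div_assoc]
            positivity
    -- combine
    have hIsplit : I = (∫ τ in (0:ℝ)..b, h τ / (t - τ) ^ α)
        + ∫ τ in b..t, h τ / (t - τ) ^ α := by
      rw [hI, ← intervalIntegral.integral_add_adjacent_intervals int1b int1bt]
    have hCδ : C * δ ^ (1-α) = M * δ ^ (1-α) + M * δ ^ (1-α) / (1-α) := by
      rw [hC]; field_simp
    rw [hIsplit, hsplit1]
    rw [hCδ]
    linarith
  -- now take δ → 0
  have hP : 0 < g 0 * t ^ (-α) :=
    mul_pos (hgpos 0 ⟨le_refl 0, ht⟩) (Real.rpow_pos_of_pos ht _)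
  have htend : Tendsto (fun δ : ℝ => C * δ ^ (1-α)) (nhdsWithin 0 (Ioi 0)) (nhds 0) := by
    have h1 : Tendsto (fun δ : ℝ => δ ^ (1-α)) (nhds 0) (nhds ((0:ℝ) ^ (1-α))) :=
      (Real.continuousAt_rpow_const 0 (1-α) (Or.inr h1α.le)).tendsto
    rw [Real.zero_rpow (ne_of_gt h1α)] at h1
    have h2 := h1.const_mul C
    rw [mul_zero] at h2
    exact h2.mono_left nhdsWithin_le_nhds
  have hev1 : ∀ᶠ δ in nhdsWithin (0:ℝ) (Ioi 0), C * δ ^ (1-α) < g 0 * t ^ (-α) :=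
    htend.eventually_lt_const hP
  have hev2 : ∀ᶠ δ in nhdsWithin (0:ℝ) (Ioi 0), δ ∈ Ioc (0:ℝ) (t/2) :=
    Ioc_mem_nhdsGT_of_mem ⟨le_refl 0, ht2⟩
  obtain ⟨δ, h1, h2⟩ := (hev1.and hev2).exists
  have := key δ h2
  linarith

theorem stmt_9 (α T : ℝ) (hα : 0 < α) (hα1 : α < 1) (hT : 0 < T) :
    ¬ ∃ ψ : ℝ → ℝ → ℝ,
      ContinuousOn (fun p : ℝ × ℝ => ψ p.1 p.2) (Icc 0 T ×ˢ Icc 0 T) ∧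
      (∀ p ∈ Ioc (0:ℝ) T ×ˢ Ioc (0:ℝ) T,
        DifferentiableAt ℝ (fun q : ℝ × ℝ => ψ q.1 q.2) p) ∧
      ContinuousOn (fun p : ℝ × ℝ => fderiv ℝ (fun q : ℝ × ℝ => ψ q.1 q.2) p)
        (Ioc (0:ℝ) T ×ˢ Ioc (0:ℝ) T) ∧
      (∀ s ∈ Icc (0:ℝ) T,
        IntegrableOn (fun t' => deriv (fun t'' => ψ t'' s) t') (Ioo 0 T) volume) ∧
      (∀ t ∈ Icc (0:ℝ) T,
        IntegrableOn (fun s' => deriv (fun s'' => ψ t s'') s') (Ioo 0 T) volume) ∧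
      (∀ t ∈ Ioo (0:ℝ) T, ∀ s ∈ Ioo (0:ℝ) T,
        0 ≤ (1 / Gamma (1 - α)) *
              (∫ τ in (0:ℝ)..t, deriv (fun t' => ψ t' s) τ / (t - τ) ^ α) +
            (1 / Gamma (1 - α)) *
              (∫ τ in (0:ℝ)..s, deriv (fun s' => ψ t s') τ / (s - τ) ^ α)) ∧
      (∀ t ∈ Icc (0:ℝ) T, ψ t t = 0) ∧
      (∀ t ∈ Icc (0:ℝ) T, ∀ s ∈ Icc (0:ℝ) T, t ≠ s → 0 < ψ t s) := by
  rintro ⟨ψ, hcont, hdiff, hfder, hint1, hint2, hineq, hdiag, hpos⟩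
  set F : ℝ × ℝ → ℝ := fun p => ψ p.1 p.2 with hF
  set t : ℝ := T / 2 with htdef
  have ht0 : 0 < t := by rw [htdef]; linarith
  have htT : t < T := by rw [htdef]; linarith
  have htIoo : t ∈ Ioo (0:ℝ) T := ⟨ht0, htT⟩
  have htIcc : t ∈ Icc (0:ℝ) T := ⟨ht0.le, htT.le⟩
  have htIoc : t ∈ Ioc (0:ℝ) T := ⟨ht0, htT.le⟩
  -- derivative facts in the first variable
  have hd1 : ∀ τ ∈ Ioc (0:ℝ) T,
      HasDerivAt (fun x => ψ x t) ((fderiv ℝ F (τ, t)) ((1:ℝ), (0:ℝ))) τ := by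
    intro τ hτ
    have hdF : HasFDerivAt F (fderiv ℝ F (τ, t)) (τ, t) :=
      (hdiff (τ, t) (Set.mem_prod.mpr ⟨hτ, htIoc⟩)).hasFDerivAt
    have hj : HasDerivAt (fun x : ℝ => ((x : ℝ), t)) (((1:ℝ), (0:ℝ))) τ :=
      (hasDerivAt_id τ).prodMk (hasDerivAt_const τ t)
    exact hdF.comp_hasDerivAt τ hj
  have hd2 : ∀ τ ∈ Ioc (0:ℝ) T,
      HasDerivAt (fun x => ψ t x) ((fderiv ℝ F (t, τ)) ((0:ℝ), (1:ℝ))) τ := by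
    intro τ hτ
    have hdF : HasFDerivAt F (fderiv ℝ F (t, τ)) (t, τ) :=
      (hdiff (t, τ) (Set.mem_prod.mpr ⟨htIoc, hτ⟩)).hasFDerivAt
    have hj : HasDerivAt (fun x : ℝ => (t, (x : ℝ))) (((0:ℝ), (1:ℝ))) τ :=
      (hasDerivAt_const τ t).prodMk (hasDerivAt_id τ)
    exact hdF.comp_hasDerivAt τ hj
  -- continuity of the partial derivatives
  have hc1 : ContinuousOn (fun τ => deriv (fun x => ψ x t) τ) (Ioc 0 T) := by
    have hL : ContinuousOn (fun τ : ℝ => fderiv ℝ F (τ, t)) (Ioc 0 T) := by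
      apply hfder.comp ((continuous_id.prodMk continuous_const).continuousOn)
      intro τ hτ
      exact Set.mem_prod.mpr ⟨hτ, htIoc⟩
    exact (hL.clm_apply continuousOn_const).congr
      (fun τ hτ => (hd1 τ hτ).deriv)
  have hc2 : ContinuousOn (fun τ => deriv (fun x => ψ t x) τ) (Ioc 0 T) := by
    have hL : ContinuousOn (fun τ : ℝ => fderiv ℝ F (t, τ)) (Ioc 0 T) := by
      apply hfder.comp ((continuous_const.prodMk continuous_id).continuousOn)
      intro τ hτ
      exact Set.mem_prod.mpr ⟨htIoc, hτ⟩
    exact (hL.clm_apply continuousOn_const).congr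
      (fun τ hτ => (hd2 τ hτ).deriv)
  -- the diagonal functions
  set g : ℝ → ℝ := fun τ => ψ τ t + ψ t τ with hg
  set h : ℝ → ℝ := fun τ => deriv (fun x => ψ x t) τ + deriv (fun x => ψ t x) τ with hh
  have hIocsub : Ioc (0:ℝ) t ⊆ Ioc 0 T := Ioc_subset_Ioc le_rfl htT.le
  have hgc : ContinuousOn g (Icc 0 t) := by
    have c1 : ContinuousOn (fun τ => ψ τ t) (Icc 0 t) := by
      apply hcont.comp ((continuous_id.prodMk continuous_const).continuousOn)
      intro τ hτ
      exact Set.mem_prod.mpr ⟨⟨hτ.1, le_trans hτ.2 htT.le⟩, htIcc⟩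
    have c2 : ContinuousOn (fun τ => ψ t τ) (Icc 0 t) := by
      apply hcont.comp ((continuous_const.prodMk continuous_id).continuousOn)
      intro τ hτ
      exact Set.mem_prod.mpr ⟨htIcc, ⟨hτ.1, le_trans hτ.2 htT.le⟩⟩
    exact c1.add c2
  have hgd : ∀ τ ∈ Ioc (0:ℝ) t, HasDerivAt g (h τ) τ := by
    intro τ hτ
    have e1 : HasDerivAt (fun x => ψ x t) (deriv (fun x => ψ x t) τ) τ :=
      (hd1 τ (hIocsub hτ)).differentiableAt.hasDerivAt
    have e2 : HasDerivAt (fun x => ψ t x) (deriv (fun x => ψ t x) τ) τ :=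
      (hd2 τ (hIocsub hτ)).differentiableAt.hasDerivAt
    exact e1.add e2
  have hhc : ContinuousOn h (Ioc 0 t) := (hc1.mono hIocsub).add (hc2.mono hIocsub)
  -- integrability
  have intA : IntervalIntegrable (fun τ => deriv (fun x => ψ x t) τ / (t - τ) ^ α)
      volume 0 t :=
    aux_wint hα hα1 ht0
      ((hint1 t htIcc).mono_set (Ioo_subset_Ioo le_rfl htT.le))
      (hc1.mono hIocsub)
  have intB : IntervalIntegrable (fun τ => deriv (fun x => ψ t x) τ / (t - τ) ^ α)
      volume 0 t :=
    aux_wint hα hα1 ht0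
      ((hint2 t htIcc).mono_set (Ioo_subset_Ioo le_rfl htT.le))
      (hc2.mono hIocsub)
  have hint : IntervalIntegrable (fun τ => h τ / (t - τ) ^ α) volume 0 t := by
    have := intA.add intB
    refine this.congr ?_
    intro τ _
    simp only [hh, add_div]
  -- sign conditions
  have hgt : g t = 0 := by
    simp only [hg]
    rw [hdiag t htIcc]; ring
  have hgpos : ∀ τ ∈ Ico (0:ℝ) t, 0 < g τ := by
    intro τ hτ
    have hτIcc : τ ∈ Icc (0:ℝ) T := ⟨hτ.1, le_trans hτ.2.le htT.le⟩
    have p1 : 0 < ψ τ t := hpos τ hτIcc t htIcc (ne_of_lt hτ.2)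
    have p2 : 0 < ψ t τ := hpos t htIcc τ hτIcc (ne_of_gt hτ.2)
    exact add_pos p1 p2
  -- the key inequality
  have hkey : (∫ τ in (0:ℝ)..t, h τ / (t - τ) ^ α) < 0 :=
    aux_key hα hα1 ht0 hgc hgd hhc hint hgt hgpos
  -- from the assumed inequality
  have hΓ : 0 < Real.Gamma (1 - α) := Real.Gamma_pos_of_pos (by linarith)
  have hc : (0:ℝ) < 1 / Real.Gamma (1 - α) := by positivity
  have h0 := hineq t htIoo t htIoo
  have hsum : 0 ≤ (∫ τ in (0:ℝ)..t, deriv (fun x => ψ x t) τ / (t - τ) ^ α)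
      + ∫ τ in (0:ℝ)..t, deriv (fun x => ψ t x) τ / (t - τ) ^ α := by
    set I1 := ∫ τ in (0:ℝ)..t, deriv (fun x => ψ x t) τ / (t - τ) ^ α
    set I2 := ∫ τ in (0:ℝ)..t, deriv (fun x => ψ t x) τ / (t - τ) ^ α
    have h0' : 0 ≤ (1 / Real.Gamma (1 - α)) * (I1 + I2) := by
      rw [mul_add]; exact h0
    nlinarith
  have heq : (∫ τ in (0:ℝ)..t, h τ / (t - τ) ^ α)
      = (∫ τ in (0:ℝ)..t, deriv (fun x => ψ x t) τ / (t - τ) ^ α)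
        + ∫ τ in (0:ℝ)..t, deriv (fun x => ψ t x) τ / (t - τ) ^ α := by
    rw [← intervalIntegral.integral_add intA intB]
    congr 1
    funext τ
    simp only [hh, add_div]
  linarith [heq ▸ hsum]
end

section
/- Let $0<\alpha<1$, $T>0$. Suppose $u:[0,T]\to\mathbb{R}$ and $v:[0,T]\to\mathbb{R}$ are functions, $\hat t\in(0,T]$, and the map $\tau\mapsto u(\hat t)-u(\hat t-\tau)-(v(\hat t)-v(\hat t-\tau))$ is nonnegative on $[0,\hat t]$ (which holds when $(t)\mapsto u(t)-v(t)$ attains its maximum over $[0,\hat t]$ at $\hat t$). Assume additionally that $K_0[u](\hat t)$ and $K_0[v](\hat t)$ exist, where $K_0[f](t)=\frac{f(t)-f(0)}{t^{\alpha}\Gamma(1-\alpha)}+\frac{\alpha}{\Gamma(1-\alpha)}\int_0^{t}(f(t)-f(t-\tau))\frac{d\tau}{\tau^{\alpha+1}}$. Then $$K_0[u](\hat t)-K_0[v](\hat t)\ \ge\ \frac{(u(\hat t)-v(\hat t))-(u(0)-v(0))}{\hat t^{\alpha}\Gamma(1-\alpha)}.$$ -/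
open MeasureTheory Set Filter Real

theorem stmt_16 (α T : ℝ) (hα : 0 < α) (hα1 : α < 1) (hT : 0 < T)
    (u v : ℝ → ℝ) (t0 : ℝ) (ht0 : t0 ∈ Ioc 0 T)
    (hpos : ∀ τ ∈ Icc (0:ℝ) t0, 0 ≤ (u t0 - u (t0 - τ)) - (v t0 - v (t0 - τ)))
    (hu : IntegrableOn (fun τ => (u t0 - u (t0 - τ)) / τ ^ (α + 1)) (Ioo 0 t0) volume)
    (hv : IntegrableOn (fun τ => (v t0 - v (t0 - τ)) / τ ^ (α + 1)) (Ioo 0 t0) volume) :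
    ((u t0 - v t0) - (u 0 - v 0)) / (t0 ^ α * Gamma (1 - α)) ≤
      ((u t0 - u 0) / (t0 ^ α * Gamma (1 - α)) +
          (α / Gamma (1 - α)) * ∫ τ in Ioo (0:ℝ) t0, (u t0 - u (t0 - τ)) / τ ^ (α + 1)) -
        ((v t0 - v 0) / (t0 ^ α * Gamma (1 - α)) +
          (α / Gamma (1 - α)) * ∫ τ in Ioo (0:ℝ) t0, (v t0 - v (t0 - τ)) / τ ^ (α + 1)) := by
  have hΓ : 0 < Gamma (1 - α) := Gamma_pos_of_pos (by linarith)
  have hint : (∫ τ in Ioo (0:ℝ) t0, (v t0 - v (t0 - τ)) / τ ^ (α + 1)) ≤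
      ∫ τ in Ioo (0:ℝ) t0, (u t0 - u (t0 - τ)) / τ ^ (α + 1) := by
    apply setIntegral_mono_on hv hu measurableSet_Ioo
    intro τ hτ
    have h := div_nonneg (hpos τ ⟨hτ.1.le, hτ.2.le⟩) (rpow_pos_of_pos hτ.1 (α+1)).le
    rw [sub_div] at h
    linarith
  have hcoef : 0 ≤ α / Gamma (1 - α) := div_nonneg hα.le hΓ.le
  have := mul_le_mul_of_nonneg_left hint hcoef
  have heq : ((u t0 - v t0) - (u 0 - v 0)) / (t0 ^ α * Gamma (1 - α)) =
      (u t0 - u 0) / (t0 ^ α * Gamma (1 - α)) - (v t0 - v 0) / (t0 ^ α * Gamma (1 - α)) := by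
    ring
  linarith
end
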